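/- Fix $\tau>0$, $p\in(0,1)$, $q<0$. For each $\epsilon>0$, let $\mu(\epsilon)$ denote the unique positive root of $\epsilon z^2-z-1+pe^{-z\tau}=0$ and $\lambda(\epsilon)$ the unique positive root of $\epsilon z^2-z-1+qe^{-z\tau}=0$. Then there is no $\epsilon_0>0$ at which $\mu'(\epsilon_0)\lambda(\epsilon_0)=\mu(\epsilon_0)\lambda'(\epsilon_0)$; consequently the ratio $\mu(\epsilon)/\lambda(\epsilon)$ has nonvanishing derivative, and $\mu_1(c)/\lambda_1(c)$ is strictly increasing in $c>0$, where $\mu_1(c)=\mu(c^{-2})/c$ and $\lambda_1(c)=\lambda(c^{-2})/c$ are the unique positive roots of $z^2-cz-1+pe^{-c\tau z}=0$ and $z^2-cz-1+qe^{-c\tau z}=0$ respectively. -/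

import Mathlib

open Real Set

/-- Implicit differentiation plus sign of the partial derivative in `z`. -/
lemma toy_aux (τ a : ℝ) (hτ : 0 < τ) (ha : a < 1) (μ : ℝ → ℝ)
    (hμ : ∀ ε > (0 : ℝ), 0 < μ ε ∧
      ε * (μ ε) ^ 2 - μ ε - 1 + a * Real.exp (-(μ ε) * τ) = 0 ∧
      ∀ z > (0 : ℝ), ε * z ^ 2 - z - 1 + a * Real.exp (-z * τ) = 0 → z = μ ε)
    (hdiff : ∀ ε > (0 : ℝ), DifferentiableAt ℝ μ ε) (ε : ℝ) (hε : 0 < ε) :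
    0 < 2 * ε * μ ε - 1 - a * τ * Real.exp (-(μ ε) * τ) ∧
      deriv μ ε * (2 * ε * μ ε - 1 - a * τ * Real.exp (-(μ ε) * τ)) = -(μ ε) ^ 2 := by
  obtain ⟨hm, hroot, huniq⟩ := hμ ε hε
  set m := μ ε with hmdef
  set m' := deriv μ ε with hm'def
  set D : ℝ := 2 * ε * m - 1 - a * τ * Real.exp (-m * τ) with hDdef
  have hmder : HasDerivAt μ m' ε := (hdiff ε hε).hasDerivAt
  -- derivative of the implicit equation
  have t1 : HasDerivAt (fun x => x * (μ x) ^ 2) (1 * m ^ 2 + ε * (2 * m ^ 1 * m')) ε :=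
    (hasDerivAt_id ε).mul (hmder.pow 2)
  have t3 : HasDerivAt (fun x => a * Real.exp (-(μ x) * τ))
      (a * (Real.exp (-m * τ) * (-m' * τ))) ε :=
    ((hmder.neg.mul_const τ).exp).const_mul a
  have hF : HasDerivAt (fun x => x * (μ x) ^ 2 - μ x - 1 + a * Real.exp (-(μ x) * τ))
      (1 * m ^ 2 + ε * (2 * m ^ 1 * m') - m' + a * (Real.exp (-m * τ) * (-m' * τ))) ε :=
    ((t1.sub hmder).sub_const 1).add t3
  have h0 : (fun _ : ℝ => (0:ℝ)) =ᶠ[nhds ε]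
      (fun x => x * (μ x) ^ 2 - μ x - 1 + a * Real.exp (-(μ x) * τ)) := by
    filter_upwards [isOpen_Ioi.mem_nhds (show ε ∈ Ioi (0:ℝ) from hε)] with x hx
    exact ((hμ x hx).2.1).symm
  have hzero := (hF.congr_of_eventuallyEq h0).unique (hasDerivAt_const ε (0:ℝ))
  have e1 : m' * D = -m ^ 2 := by
    rw [hDdef]; linear_combination hzero
  -- the one-variable function φ and its sign on (0, m)
  set φ : ℝ → ℝ := fun z => ε * z ^ 2 - z - 1 + a * Real.exp (-z * τ) with hφdef
  have hφ0 : φ 0 = a - 1 := by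
    show ε * 0 ^ 2 - 0 - 1 + a * Real.exp (-0 * τ) = a - 1
    rw [show (-0:ℝ) * τ = 0 by ring, Real.exp_zero]
    ring
  have hφm : φ m = 0 := hroot
  have hφcont : Continuous φ := by
    apply Continuous.add
    · fun_prop
    · exact continuous_const.mul ((continuous_neg.mul continuous_const).rexp)
  have hneg : ∀ z ∈ Ioo (0:ℝ) m, φ z < 0 := by
    intro z hz
    by_contra hge
    push_neg at hge
    rcases eq_or_lt_of_le hge with heq | hpos
    · exact absurd (huniq z hz.1 heq.symm) (ne_of_lt hz.2)
    · have hsub : (0:ℝ) ∈ Icc (φ 0) (φ z) := by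
        rw [hφ0]; exact ⟨by linarith, le_of_lt hpos⟩
      obtain ⟨c, hc, hcz⟩ := intermediate_value_Icc (le_of_lt hz.1) hφcont.continuousOn hsub
      have hc0 : 0 < c := by
        rcases eq_or_lt_of_le hc.1 with h | h
        · exfalso; rw [← h, hφ0] at hcz; linarith
        · exact h
      have hcm := huniq c hc0 hcz
      have hlt : c < m := lt_of_le_of_lt hc.2 hz.2
      linarith [hcm, hlt]
  -- φ has derivative D at m
  have hφder : HasDerivAt φ D m := by
    have h1 : HasDerivAt (fun z : ℝ => ε * z ^ 2) (ε * (2 * m ^ 1 * 1)) m :=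
      ((hasDerivAt_id m).pow 2).const_mul ε
    have h2 : HasDerivAt (fun z : ℝ => a * Real.exp (-z * τ))
        (a * (Real.exp (-m * τ) * (-1 * τ))) m :=
      ((((hasDerivAt_id m).neg).mul_const τ).exp).const_mul a
    have h3 := ((h1.sub (hasDerivAt_id m)).sub_const 1).add h2
    convert h3 using 1
    · rfl
    · rfl
    · rfl
    rw [hDdef]; ring
  -- hence D ≥ 0 via slopes from the left
  have hDne : D ≠ 0 := by
    intro h
    rw [h, mul_zero] at e1
    nlinarith [sq_nonneg m]
  have hDge : 0 ≤ D := by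
    have hslope := hasDerivAt_iff_tendsto_slope.mp hφder
    have hmono : nhdsWithin m (Iio m) ≤ nhdsWithin m ({m}ᶜ) :=
      nhdsWithin_mono m (fun x hx => ne_of_lt hx)
    have htends := hslope.mono_left hmono
    have hev : ∀ᶠ z in nhdsWithin m (Iio m), 0 ≤ slope φ m z := by
      filter_upwards [Ioo_mem_nhdsLT_of_mem (show m ∈ Ioc (0:ℝ) m from ⟨hm, le_refl m⟩)]
        with z hz
      have h1 : φ z < 0 := hneg z hz
      have h2 : z - m < 0 := by linarith [hz.2]
      rw [slope_def_field, hφm]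
      exact le_of_lt (div_pos_of_neg_of_neg (by linarith) h2)
    exact ge_of_tendsto htends hev
  exact ⟨lt_of_le_of_ne hDge (Ne.symm hDne), e1⟩

/-- For the `toy' model: with `τ > 0`, `p ∈ (0,1)`, `q < 0`, let `μ(ε)` and
`lam(ε)` be the unique positive roots of `ε z² - z - 1 + p e^{-zτ} = 0` and
`ε z² - z - 1 + q e^{-zτ} = 0`. Then there is no `ε₀ > 0` with
`μ'(ε₀) lam(ε₀) = μ(ε₀) lam'(ε₀)`, and the ratio `μ₁(c)/λ₁(c)` (where
`μ₁(c) = μ(c⁻²)/c`, `λ₁(c) = lam(c⁻²)/c`) is strictly increasing in `c > 0`. -/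
theorem toy_ratio_strictly_increasing (τ p q : ℝ) (hτ : 0 < τ)
    (hp : p ∈ Set.Ioo (0 : ℝ) 1) (hq : q < 0)
    (μ lam : ℝ → ℝ)
    (hμ : ∀ ε > (0 : ℝ), 0 < μ ε ∧
      ε * (μ ε) ^ 2 - μ ε - 1 + p * Real.exp (-(μ ε) * τ) = 0 ∧
      ∀ z > (0 : ℝ), ε * z ^ 2 - z - 1 + p * Real.exp (-z * τ) = 0 → z = μ ε)
    (hlam : ∀ ε > (0 : ℝ), 0 < lam ε ∧
      ε * (lam ε) ^ 2 - lam ε - 1 + q * Real.exp (-(lam ε) * τ) = 0 ∧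
      ∀ z > (0 : ℝ), ε * z ^ 2 - z - 1 + q * Real.exp (-z * τ) = 0 → z = lam ε)
    (hμdiff : ∀ ε > (0 : ℝ), DifferentiableAt ℝ μ ε)
    (hlamdiff : ∀ ε > (0 : ℝ), DifferentiableAt ℝ lam ε) :
    (∀ ε₀ > (0 : ℝ), deriv μ ε₀ * lam ε₀ ≠ μ ε₀ * deriv lam ε₀) ∧
    StrictMonoOn (fun c : ℝ => (μ (1 / c ^ 2) / c) / (lam (1 / c ^ 2) / c))
      (Set.Ioi 0) := by
  -- the core strict inequality
  have core : ∀ ε > (0:ℝ), deriv μ ε * lam ε < μ ε * deriv lam ε := by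
    intro ε hε
    obtain ⟨hD1, e1⟩ := toy_aux τ p hτ hp.2 μ hμ hμdiff ε hε
    obtain ⟨hD2, e2⟩ := toy_aux τ q hτ (hq.trans one_pos) lam hlam hlamdiff ε hε
    obtain ⟨hm, hroot1, -⟩ := hμ ε hε
    obtain ⟨hl, hroot2, -⟩ := hlam ε hε
    set m := μ ε
    set l := lam ε
    set m' := deriv μ ε
    set l' := deriv lam ε
    set E₁ : ℝ := 2 * ε * m - 1 - p * τ * Real.exp (-m * τ) with hE1def
    set E₂ : ℝ := 2 * ε * l - 1 - q * τ * Real.exp (-l * τ) with hE2def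
    have hexp1 : 0 < Real.exp (-m * τ) := Real.exp_pos _
    have hexp2 : 0 < Real.exp (-l * τ) := Real.exp_pos _
    -- m < l
    have h1 : ε * m ^ 2 - m - 1 < 0 := by nlinarith [mul_pos hp.1 hexp1]
    have h2 : 0 < ε * l ^ 2 - l - 1 := by nlinarith [mul_pos (neg_pos.mpr hq) hexp2]
    have hml : m < l := by
      have hA : (ε * m ^ 2 - m - 1) * l < 0 := mul_neg_of_neg_of_pos h1 hl
      have hB : 0 < (ε * l ^ 2 - l - 1) * m := mul_pos h2 hm
      nlinarith [hA, hB, mul_pos (mul_pos hε hm) hl]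
    -- rewrite E's using the root equations
    have hE1' : E₁ = 2 * ε * m - 1 - τ * (1 + m - ε * m ^ 2) := by
      rw [hE1def]; linear_combination (-τ) * hroot1
    have hE2' : E₂ = 2 * ε * l - 1 - τ * (1 + l - ε * l ^ 2) := by
      rw [hE2def]; linear_combination (-τ) * hroot2
    have hprod : 0 < (l - m) * (1 + τ + τ * ε * m * l) := by
      apply mul_pos (by linarith)
      have : 0 < τ * ε * m * l := by positivity
      linarith
    have hfin : l * E₁ - m * E₂ < 0 := by
      rw [hE1', hE2']; nlinarith [hprod]
    have key : (m' * l - m * l') * (E₁ * E₂) = m * l * (l * E₁ - m * E₂) := by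
      linear_combination (l * E₂) * e1 - (m * E₁) * e2
    have h5 : (m' * l - m * l') * (E₁ * E₂) < 0 := by
      rw [key]; exact mul_neg_of_pos_of_neg (mul_pos hm hl) hfin
    have hE : 0 < E₁ * E₂ := mul_pos hD1 hD2
    nlinarith [h5, hE]
  constructor
  · exact fun ε₀ hε₀ => ne_of_lt (core ε₀ hε₀)
  · -- strict antitonicity of ε ↦ μ ε / lam ε on (0, ∞)
    have hanti : StrictAntiOn (fun x => μ x / lam x) (Ioi (0:ℝ)) := by
      apply strictAntiOn_of_deriv_neg (convex_Ioi 0)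
      · intro x hx
        exact ((hμdiff x hx).div (hlamdiff x hx) (ne_of_gt (hlam x hx).1)).continuousAt.continuousWithinAt
      · intro x hx
        rw [interior_Ioi] at hx
        have hder : HasDerivAt (fun x => μ x / lam x)
            ((deriv μ x * lam x - μ x * deriv lam x) / (lam x) ^ 2) x :=
          (hμdiff x hx).hasDerivAt.div (hlamdiff x hx).hasDerivAt (ne_of_gt (hlam x hx).1)
        rw [hder.deriv]
        apply div_neg_of_neg_of_pos
        · linarith [core x hx]
        · exact pow_pos (hlam x hx).1 2
    intro a ha b hb hab
    simp only [mem_Ioi] at ha hb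
    have hform : ∀ c : ℝ, 0 < c → (μ (1 / c ^ 2) / c) / (lam (1 / c ^ 2) / c)
        = μ (1 / c ^ 2) / lam (1 / c ^ 2) := by
      intro c hc
      have hl0 : 0 < lam (1 / c ^ 2) := (hlam _ (by positivity)).1
      field_simp
    have hmema : (1 / a ^ 2 : ℝ) ∈ Ioi (0:ℝ) := by simp; positivity
    have hmemb : (1 / b ^ 2 : ℝ) ∈ Ioi (0:ℝ) := by simp; positivity
    have hlt : (1 / b ^ 2 : ℝ) < 1 / a ^ 2 := by
      apply one_div_lt_one_div_of_lt (by positivity)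
      nlinarith
    have := hanti hmemb hmema hlt
    simp only [hform a ha, hform b hb]
    exact this
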